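/- For every finite set X with |X| ≥ 2 and every symmetric map δ : X×X → Υ, there exists a rooted median graph G with root ρ, with at most |X|² + |X| vertices, whose set of leaves is (identified with) X, together with a labeling t of the vertices med(ρ,x,y) (x,y ∈ X distinct), such that δ(x,y) = t(med(ρ,x,y)) for all distinct x,y ∈ X and, moreover, ρ itself is of the form med(ρ,x,y) for some distinct x,y ∈ X. -/

import Mathlib

/-- `m` is a median of the triple `u, v, w` in `G`. -/
def IsMedianVtx {V : Type*} (G : SimpleGraph V) (u v w m : V) : Prop :=
  G.dist u m + G.dist m v = G.dist u v ∧
  G.dist v m + G.dist m w = G.dist v w ∧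
  G.dist u m + G.dist m w = G.dist u w

/-- A median graph: a connected graph in which every triple of vertices has a
unique median. -/
def IsMedianGraph {V : Type*} (G : SimpleGraph V) : Prop :=
  G.Connected ∧ ∀ u v w : V, ∃! m : V, IsMedianVtx G u v w m

/-- `v` is a leaf of `G` relative to the root `ρ`: a degree-one vertex distinct
from `ρ` (degree one is expressed as having a unique neighbour). -/
def IsLeafAt {V : Type*} (G : SimpleGraph V) (ρ v : V) : Prop :=
  v ≠ ρ ∧ ∃! u : V, G.Adj v u

namespace Stmt10Aux

open SimpleGraph

/-- Natural "absolute difference". -/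
def nd (a b : ℕ) : ℕ := (a - b) + (b - a)

abbrev V (n : ℕ) := (Fin n × Fin n) ⊕ Fin n

def rev {n : ℕ} (i : Fin n) : Fin n := ⟨n - 1 - i.val, by have := i.isLt; omega⟩

def c {n : ℕ} (i : Fin n) : Fin n × Fin n := (i, rev i)

def pr {n : ℕ} : V n → Fin n × Fin n := Sum.elim id c

def eps {n : ℕ} : V n → ℕ := Sum.elim (fun _ => 0) (fun _ => 1)

def ℓ {n : ℕ} (p q : Fin n × Fin n) : ℕ := nd p.1.val q.1.val + nd p.2.val q.2.val

def D {n : ℕ} (u v : V n) : ℕ := if u = v then 0 else ℓ (pr u) (pr v) + eps u + eps v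

lemma ℓ_comm {n : ℕ} (p q : Fin n × Fin n) : ℓ p q = ℓ q p := by unfold ℓ nd; omega

lemma ℓ_self {n : ℕ} (p : Fin n × Fin n) : ℓ p p = 0 := by unfold ℓ nd; omega

lemma ℓ_eq_zero {n : ℕ} {p q : Fin n × Fin n} (h : ℓ p q = 0) : p = q := by
  have h1 : p.1.val = q.1.val ∧ p.2.val = q.2.val := by unfold ℓ nd at h; omega
  exact Prod.ext (Fin.ext h1.1) (Fin.ext h1.2)

lemma ℓ_triangle {n : ℕ} (p q r : Fin n × Fin n) : ℓ p r ≤ ℓ p q + ℓ q r := by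
  unfold ℓ nd; omega

lemma D_comm {n : ℕ} (u v : V n) : D u v = D v u := by
  unfold D
  by_cases h : u = v
  · simp [h]
  · rw [if_neg h, if_neg (Ne.symm h), ℓ_comm]; omega

lemma D_grid {n : ℕ} (u : V n) (q : Fin n × Fin n) :
    D u (Sum.inl q) = ℓ (pr u) q + eps u := by
  unfold D
  by_cases h : u = Sum.inl q
  · subst h; simp [pr, eps, ℓ_self]
  · rw [if_neg h]; simp [pr, eps]

lemma D_eq_zero {n : ℕ} {u v : V n} : D u v = 0 ↔ u = v := by
  constructor
  · intro h
    by_contra hne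
    unfold D at h
    rw [if_neg hne] at h
    rcases u with p | x <;> rcases v with q | y
    · have h' : ℓ p q = 0 := by simpa [eps, pr] using h
      exact hne (congrArg Sum.inl (ℓ_eq_zero h'))
    · simp [eps] at h
    · simp [eps] at h
    · simp [eps] at h
  · intro h; subst h; simp [D]

lemma D_triangle {n : ℕ} (u v w : V n) : D u w ≤ D u v + D v w := by
  by_cases huw : u = w
  · subst huw; simp [D]
  by_cases huv : u = v
  · subst huv; simp [D]
  by_cases hvw : v = w
  · subst hvw; simp [D]
  unfold D
  rw [if_neg huw, if_neg huv, if_neg hvw]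
  have := ℓ_triangle (pr u) (pr v) (pr w)
  omega

def G (n : ℕ) : SimpleGraph (V n) where
  Adj u v := D u v = 1
  symm := by constructor; intro u v h; rwa [D_comm]
  loopless := by constructor; intro u h; simp [D] at h

lemma adj_iff {n : ℕ} {u v : V n} : (G n).Adj u v ↔ D u v = 1 := Iff.rfl

/-- one step toward `a` from `b`. -/
lemma step_toward {n : ℕ} (a b : Fin n) (h : a.val ≠ b.val) :
    ∃ b' : Fin n, nd a.val b'.val + 1 = nd a.val b.val ∧ nd b'.val b.val = 1 := by
  rcases lt_or_gt_of_ne h with hlt | hgt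
  · -- a < b, move down
    refine ⟨⟨b.val - 1, by have := b.isLt; omega⟩, ?_, ?_⟩ <;> simp [nd] <;> omega
  · refine ⟨⟨b.val + 1, by have := a.isLt; omega⟩, ?_, ?_⟩ <;> simp [nd] <;> omega

lemma ℓ_step {n : ℕ} (p q : Fin n × Fin n) (h : p ≠ q) :
    ∃ q', ℓ p q' + 1 = ℓ p q ∧ ℓ q' q = 1 := by
  by_cases h1 : p.1.val = q.1.val
  · have h2 : p.2.val ≠ q.2.val := by
      intro h2; exact h (Prod.ext (Fin.ext h1) (Fin.ext h2))
    obtain ⟨b', hb1, hb2⟩ := step_toward p.2 q.2 h2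
    refine ⟨(q.1, b'), ?_, ?_⟩ <;>
      · simp only [ℓ, nd] at hb1 hb2 ⊢
        omega
  · obtain ⟨a', ha1, ha2⟩ := step_toward p.1 q.1 h1
    refine ⟨(a', q.2), ?_, ?_⟩ <;>
      · simp only [ℓ, nd] at ha1 ha2 ⊢
        omega

lemma step {n : ℕ} (u v : V n) (h : u ≠ v) :
    ∃ w, D u w + 1 = D u v ∧ D w v = 1 := by
  match v with
  | Sum.inr x =>
    refine ⟨Sum.inl (c x), ?_, ?_⟩
    · rw [D_grid, D]
      rw [if_neg h]
      simp [pr, eps]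
    · rw [D_comm, D_grid]
      simp [pr, eps, ℓ_self]
  | Sum.inl q =>
    by_cases hpq : pr u = q
    · rcases u with p | x
      · exact absurd (congrArg Sum.inl hpq) h
      · refine ⟨Sum.inr x, ?_, ?_⟩
        · rw [D_grid, ← hpq]
          simp [D, ℓ_self, eps]
        · rw [D_grid, ← hpq]
          simp [ℓ_self, eps]
    · obtain ⟨q', hq1, hq2⟩ := ℓ_step (pr u) q hpq
      refine ⟨Sum.inl q', ?_, ?_⟩
      · rw [D_grid, D_grid]; omega
      · rw [D_grid]; simp [pr, eps]; omega

lemma exists_walk {n : ℕ} (u v : V n) : ∃ p : (G n).Walk u v, p.length = D u v := by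
  generalize hk : D u v = k
  induction k generalizing v with
  | zero =>
    have : u = v := D_eq_zero.mp hk
    subst this
    exact ⟨SimpleGraph.Walk.nil, rfl⟩
  | succ k ih =>
    have hne : u ≠ v := by intro h; subst h; simp [D] at hk
    obtain ⟨w, h1, h2⟩ := step u v hne
    obtain ⟨p, hp⟩ := ih w (by omega)
    exact ⟨p.concat (adj_iff.mpr h2), by rw [SimpleGraph.Walk.length_concat, hp]⟩

lemma D_le_walk {n : ℕ} {u v : V n} (p : (G n).Walk u v) : D u v ≤ p.length := by
  induction p with
  | nil => simp [D]
  | @cons a b c h q ih =>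
    have h1 : D a b = 1 := h
    have := D_triangle a b c
    simp only [SimpleGraph.Walk.length_cons]
    omega

lemma dist_eq {n : ℕ} (u v : V n) : (G n).dist u v = D u v := by
  obtain ⟨p, hp⟩ := exists_walk u v
  refine le_antisymm (hp ▸ SimpleGraph.dist_le p) ?_
  obtain ⟨q, hq⟩ := p.reachable.exists_walk_length_eq_dist
  rw [← hq]
  exact D_le_walk q

lemma connected {n : ℕ} (hn : 1 ≤ n) : (G n).Connected := by
  have : Nonempty (V n) := ⟨Sum.inr ⟨0, hn⟩⟩
  exact SimpleGraph.Connected.mk (fun u v => ⟨(exists_walk u v).choose⟩)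


lemma D_self {n : ℕ} (u : V n) : D u u = 0 := by simp [D]

lemma D_ne {n : ℕ} {u v : V n} (h : u ≠ v) :
    D u v = ℓ (pr u) (pr v) + eps u + eps v := by unfold D; rw [if_neg h]

def med3 (a b c : ℕ) : ℕ := min (max a b) (min (max b c) (max a c))

def medpt {n : ℕ} (p q r : Fin n × Fin n) : Fin n × Fin n :=
  (⟨med3 p.1.val q.1.val r.1.val, by
      have := p.1.isLt; have := q.1.isLt; have := r.1.isLt; unfold med3; omega⟩,
   ⟨med3 p.2.val q.2.val r.2.val, by
      have := p.2.isLt; have := q.2.isLt; have := r.2.isLt; unfold med3; omega⟩)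

lemma med1 (a b c m : ℕ) :
    (nd a m + nd m b = nd a b ∧ nd b m + nd m c = nd b c ∧ nd a m + nd m c = nd a c) ↔
      m = med3 a b c := by
  unfold nd med3; omega

lemma nd_tri (x y z : ℕ) : nd x z ≤ nd x y + nd y z := by unfold nd; omega

lemma ℓ_split {n : ℕ} (p q m : Fin n × Fin n) :
    ℓ p m + ℓ m q = ℓ p q ↔
      (nd p.1.val m.1.val + nd m.1.val q.1.val = nd p.1.val q.1.val ∧
       nd p.2.val m.2.val + nd m.2.val q.2.val = nd p.2.val q.2.val) := by
  have h1 := nd_tri p.1.val m.1.val q.1.val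
  have h2 := nd_tri p.2.val m.2.val q.2.val
  unfold ℓ
  omega

lemma grid_med_iff {n : ℕ} (p q r m : Fin n × Fin n) :
    (ℓ p m + ℓ m q = ℓ p q ∧ ℓ q m + ℓ m r = ℓ q r ∧ ℓ p m + ℓ m r = ℓ p r) ↔
      m = medpt p q r := by
  have h : m = medpt p q r ↔
      (m.1.val = med3 p.1.val q.1.val r.1.val ∧ m.2.val = med3 p.2.val q.2.val r.2.val) := by
    simp [medpt, Prod.ext_iff, Fin.ext_iff]
  rw [h, ℓ_split p q m, ℓ_split q r m, ℓ_split p r m,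
    ← med1 p.1.val q.1.val r.1.val m.1.val, ← med1 p.2.val q.2.val r.2.val m.2.val]
  tauto

lemma leaf_between_false {n : ℕ} (z : Fin n) (a b : V n)
    (ha : a ≠ Sum.inr z) (hb : b ≠ Sum.inr z)
    (h : D a (Sum.inr z) + D (Sum.inr z) b = D a b) : False := by
  have h1 : D a (Sum.inr z) = ℓ (pr a) (c z) + eps a + 1 := by
    rw [D_ne ha]; simp [pr, eps]
  have h2 : D (Sum.inr z) b = ℓ (c z) (pr b) + eps b + 1 := by
    rw [D_ne (Ne.symm hb)]; simp [pr, eps]; omega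
  have h3 : D a b ≤ ℓ (pr a) (pr b) + eps a + eps b := by
    unfold D; split <;> omega
  have ht := ℓ_triangle (pr a) (c z) (pr b)
  omega

lemma med_is_median {n : ℕ} (u v w : V n) (huv : u ≠ v) (hvw : v ≠ w) (huw : u ≠ w) :
    IsMedianVtx (G n) u v w (Sum.inl (medpt (pr u) (pr v) (pr w))) := by
  obtain ⟨e1, e2, e3⟩ := (grid_med_iff (pr u) (pr v) (pr w) (medpt (pr u) (pr v) (pr w))).mpr rfl
  set mp := medpt (pr u) (pr v) (pr w) with hmp
  have c1 := ℓ_comm (pr v) mp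
  have c2 := ℓ_comm (pr w) mp
  refine ⟨?_, ?_, ?_⟩ <;>
    rw [dist_eq, dist_eq, dist_eq, D_grid, D_comm (Sum.inl mp), D_grid]
  · rw [D_ne huv]; omega
  · rw [D_ne hvw]; omega
  · rw [D_ne huw]; omega

lemma median_unique {n : ℕ} (u v w : V n) :
    ∃! m : V n, IsMedianVtx (G n) u v w m := by
  by_cases huv : u = v
  · subst huv
    refine ⟨u, ?_, ?_⟩
    · simp only [IsMedianVtx, dist_eq, D_self]
      simp
    · rintro m ⟨h1, -, -⟩
      simp only [dist_eq] at h1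
      rw [D_self, D_comm m u] at h1
      exact (D_eq_zero.mp (Nat.eq_zero_of_add_eq_zero_right h1)).symm
  by_cases hvw : v = w
  · subst hvw
    refine ⟨v, ?_, ?_⟩
    · simp only [IsMedianVtx, dist_eq, D_self]
      simp
    · rintro m ⟨-, h2, -⟩
      simp only [dist_eq] at h2
      rw [D_self, D_comm m v] at h2
      exact (D_eq_zero.mp (Nat.eq_zero_of_add_eq_zero_right h2)).symm
  by_cases huw : u = w
  · subst huw
    refine ⟨u, ?_, ?_⟩
    · simp only [IsMedianVtx, dist_eq, D_self]
      simp
    · rintro m ⟨-, -, h3⟩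
      simp only [dist_eq] at h3
      rw [D_self, D_comm m u] at h3
      exact (D_eq_zero.mp (Nat.eq_zero_of_add_eq_zero_right h3)).symm
  -- pairwise distinct
  refine ⟨Sum.inl (medpt (pr u) (pr v) (pr w)), med_is_median u v w huv hvw huw, ?_⟩
  rintro m ⟨h1, h2, h3⟩
  simp only [dist_eq] at h1 h2 h3
  rcases m with qm | z
  · rw [D_grid u qm, D_comm (Sum.inl qm) v, D_grid v qm, D_ne huv] at h1
    rw [D_grid v qm, D_comm (Sum.inl qm) w, D_grid w qm, D_ne hvw] at h2
    rw [D_grid u qm, D_comm (Sum.inl qm) w, D_grid w qm, D_ne huw] at h3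
    have c1 := ℓ_comm (pr v) qm
    have c2 := ℓ_comm (pr w) qm
    have := (grid_med_iff (pr u) (pr v) (pr w) qm).mp ⟨by omega, by omega, by omega⟩
    rw [this]
  · exfalso
    by_cases hmu : Sum.inr z = u
    · exact leaf_between_false z v w (fun hh => huv (hh.trans hmu).symm)
        (fun hh => huw (hh.trans hmu).symm) h2
    by_cases hmv : Sum.inr z = v
    · exact leaf_between_false z u w (fun hh => huv (hh.trans hmv))
        (fun hh => hvw ((hh.trans hmv).symm)) h3
    · exact leaf_between_false z u v (fun hh => hmu hh.symm) (fun hh => hmv hh.symm) h1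


lemma nd_self (a : ℕ) : nd a a = 0 := by unfold nd; omega

lemma adj_leaf_iff {n : ℕ} (x : Fin n) (u : V n) :
    (G n).Adj (Sum.inr x) u ↔ u = Sum.inl (c x) := by
  constructor
  · intro h
    have h' : D (Sum.inr x) u = 1 := h
    rcases u with q | y
    · rw [D_grid] at h'
      simp only [pr, eps, Sum.elim_inr] at h'
      have h0 : ℓ (c x) q = 0 := by omega
      rw [ℓ_eq_zero h0]
    · exfalso
      by_cases hxy : (Sum.inr x : V n) = Sum.inr y
      · rw [← hxy, D_self] at h'
        exact absurd h' (by simp)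
      · rw [D_ne hxy] at h'
        simp only [eps, Sum.elim_inr] at h'
        omega
  · intro h
    subst h
    show D (Sum.inr x) (Sum.inl (c x)) = 1
    rw [D_grid]
    simp [pr, eps, ℓ_self]

lemma fin_nbr {n : ℕ} (hn : 2 ≤ n) (a : Fin n) : ∃ a' : Fin n, nd a.val a'.val = 1 := by
  by_cases h : a.val = 0
  · refine ⟨⟨1, by omega⟩, ?_⟩
    simp [nd, h]
  · refine ⟨⟨a.val - 1, by have := a.isLt; omega⟩, ?_⟩
    simp [nd] <;> omega

lemma grid_not_leaf {n : ℕ} (hn : 2 ≤ n) (p : Fin n × Fin n) (ρ : V n) :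
    ¬ IsLeafAt (G n) ρ (Sum.inl p) := by
  rintro ⟨-, u, -, huniq⟩
  obtain ⟨a', ha⟩ := fin_nbr hn p.1
  obtain ⟨b', hb⟩ := fin_nbr hn p.2
  have hane : p.1.val ≠ a'.val := by intro h; rw [h, nd_self] at ha; exact absurd ha (by simp)
  have hbne : p.2.val ≠ b'.val := by intro h; rw [h, nd_self] at hb; exact absurd hb (by simp)
  have h1 : (G n).Adj (Sum.inl p) (Sum.inl (a', p.2)) := by
    show D (Sum.inl p) (Sum.inl (a', p.2)) = 1
    rw [D_grid]
    simp [pr, eps, ℓ, nd_self, ha]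
  have h2 : (G n).Adj (Sum.inl p) (Sum.inl (p.1, b')) := by
    show D (Sum.inl p) (Sum.inl (p.1, b')) = 1
    rw [D_grid]
    simp [pr, eps, ℓ, nd_self, hb]
  have e1 := huniq _ h1
  have e2 := huniq _ h2
  rw [← e2] at e1
  have e3 : (a', p.2) = (p.1, b') := by
    injection e1 with e3
  exact hane (congrArg (fun q => q.1.val) e3).symm

lemma leaf_is_leaf {n : ℕ} (x : Fin n) (ρ : Fin n × Fin n) :
    IsLeafAt (G n) (Sum.inl ρ) (Sum.inr x) := by
  refine ⟨by simp, Sum.inl (c x), (adj_leaf_iff x _).mpr rfl, fun u hu => (adj_leaf_iff x u).mp hu⟩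

lemma card_V {n : ℕ} : Nat.card (V n) = n * n + n := by
  simp [Nat.card_eq_fintype_card]

end Stmt10Aux

open Stmt10Aux

/-- For every symmetric map `δ` on a finite set `X` with `|X| ≥ 2` there
is a rooted median graph `G` with root `ρ`, with at most `|X|² + |X|` vertices, whose
leaf set is (identified with) `X`, together with a labeling `t` such that
`δ x y = t (med(ρ, x, y))` for all distinct `x, y ∈ X`, and such that `ρ` itself is
the median `med(ρ, x, y)` of some pair of distinct leaves. -/
theorem stmt_10 {X Υ : Type} [Fintype X] (h2 : 2 ≤ Fintype.card X)
    (δ : X → X → Υ) (hsym : ∀ x y : X, x ≠ y → δ x y = δ y x) :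
    ∃ (V : Type) (_ : Finite V) (G : SimpleGraph V) (ρ : V) (leaf : X → V) (t : V → Υ),
      IsMedianGraph G ∧
      Nat.card V ≤ Fintype.card X ^ 2 + Fintype.card X ∧
      Function.Injective leaf ∧
      Set.range leaf = {v : V | IsLeafAt G ρ v} ∧
      (∀ x y : X, x ≠ y →
        ∃ m, IsMedianVtx G ρ (leaf x) (leaf y) m ∧ t m = δ x y) ∧
      (∃ x y : X, x ≠ y ∧ IsMedianVtx G ρ (leaf x) (leaf y) ρ) := by
  classical
  obtain ⟨n, hn⟩ : ∃ n, Fintype.card X = n := ⟨_, rfl⟩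
  have hn2 : 2 ≤ n := hn ▸ h2
  have hn0 : 0 < n := by omega
  obtain ⟨e⟩ : Nonempty (X ≃ Fin n) := ⟨Fintype.equivFinOfCardEq hn⟩
  refine ⟨V n, inferInstance, G n, Sum.inl (⟨0, hn0⟩, ⟨0, hn0⟩), fun x => Sum.inr (e x),
    Sum.elim (fun p => δ (e.symm p.1) (e.symm (rev p.2))) (fun z => δ (e.symm z) (e.symm z)),
    ⟨connected (by omega), median_unique⟩, ?_, ?_, ?_, ?_, ?_⟩
  · rw [card_V, hn, pow_two]
  · exact fun a b hab => e.injective (by injection hab)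
  · ext v
    simp only [Set.mem_range, Set.mem_setOf_eq]
    constructor
    · rintro ⟨x, rfl⟩
      exact leaf_is_leaf (e x) _
    · intro hv
      rcases v with p | z
      · exact absurd hv (grid_not_leaf hn2 p _)
      · exact ⟨e.symm z, by simp⟩
  · intro x y hxy
    have hij : e x ≠ e y := fun h => hxy (e.injective h)
    have hvi := (e x).isLt
    have hvj := (e y).isLt
    refine ⟨Sum.inl (medpt (pr (Sum.inl (⟨0, hn0⟩, ⟨0, hn0⟩))) (pr (Sum.inr (e x))) (pr (Sum.inr (e y)))),
      med_is_median _ _ _ (by simp) (by simp [hij]) (by simp), ?_⟩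
    have h1 : (medpt (pr (Sum.inl ((⟨0, hn0⟩ : Fin n), (⟨0, hn0⟩ : Fin n)))) (pr (Sum.inr (e x))) (pr (Sum.inr (e y)))).1.val
        = min (e x).val (e y).val := by
      show med3 0 (e x).val (e y).val = _
      unfold med3; omega
    have h2 : (medpt (pr (Sum.inl ((⟨0, hn0⟩ : Fin n), (⟨0, hn0⟩ : Fin n)))) (pr (Sum.inr (e x))) (pr (Sum.inr (e y)))).2.val
        = n - 1 - max (e x).val (e y).val := by
      show med3 0 (n - 1 - (e x).val) (n - 1 - (e y).val) = _
      unfold med3; omega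
    simp only [Sum.elim_inl]
    have h3 : rev (medpt (pr (Sum.inl ((⟨0, hn0⟩ : Fin n), (⟨0, hn0⟩ : Fin n)))) (pr (Sum.inr (e x))) (pr (Sum.inr (e y)))).2
        = (⟨max (e x).val (e y).val, by omega⟩ : Fin n) := by
      apply Fin.ext
      show n - 1 - (medpt (pr (Sum.inl ((⟨0, hn0⟩ : Fin n), (⟨0, hn0⟩ : Fin n)))) (pr (Sum.inr (e x))) (pr (Sum.inr (e y)))).2.val
        = max (e x).val (e y).val
      rw [h2]
      omega
    rw [h3]
    rcases le_or_gt (e x).val (e y).val with hle | hlt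
    · have h4 : (medpt (pr (Sum.inl ((⟨0, hn0⟩ : Fin n), (⟨0, hn0⟩ : Fin n)))) (pr (Sum.inr (e x))) (pr (Sum.inr (e y)))).1 = e x := by
        apply Fin.ext; rw [h1]; omega
      have h5 : (⟨max (e x).val (e y).val, by omega⟩ : Fin n) = e y := by
        apply Fin.ext
        show max (e x).val (e y).val = (e y).val
        omega
      rw [h4, h5, e.symm_apply_apply, e.symm_apply_apply]
    · have h4 : (medpt (pr (Sum.inl ((⟨0, hn0⟩ : Fin n), (⟨0, hn0⟩ : Fin n)))) (pr (Sum.inr (e x))) (pr (Sum.inr (e y)))).1 = e y := by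
        apply Fin.ext; rw [h1]; omega
      have h5 : (⟨max (e x).val (e y).val, by omega⟩ : Fin n) = e x := by
        apply Fin.ext
        show max (e x).val (e y).val = (e x).val
        omega
      rw [h4, h5, e.symm_apply_apply, e.symm_apply_apply]
      exact (hsym x y hxy).symm
  · refine ⟨e.symm ⟨0, hn0⟩, e.symm ⟨n - 1, by omega⟩, ?_, ?_⟩
    · intro h
      have := congrArg (fun z => (e z).val) h
      simp only [Equiv.apply_symm_apply] at this
      omega
    · have hmed := med_is_median (n := n) (Sum.inl (⟨0, hn0⟩, ⟨0, hn0⟩))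
        (Sum.inr (e (e.symm ⟨0, hn0⟩))) (Sum.inr (e (e.symm ⟨n - 1, by omega⟩)))
        (by simp) (by simp [Fin.ext_iff]; omega) (by simp)
      have heq : Sum.inl (medpt (pr (Sum.inl ((⟨0, hn0⟩ : Fin n), (⟨0, hn0⟩ : Fin n))))
          (pr (Sum.inr (e (e.symm ⟨0, hn0⟩)))) (pr (Sum.inr (e (e.symm ⟨n - 1, by omega⟩)))))
          = (Sum.inl (⟨0, hn0⟩, ⟨0, hn0⟩) : V n) := by
        simp only [Equiv.apply_symm_apply]
        congr 1
        apply Prod.ext <;> apply Fin.ext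
        · show med3 0 0 (n - 1) = 0
          unfold med3; omega
        · show med3 0 (n - 1 - 0) (n - 1 - (n - 1)) = 0
          unfold med3; omega
      rw [heq] at hmed
      exact hmed
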